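/- Let y¹,…,y^N ∈ ℝⁿ be unit vectors and λ₁,…,λ_N > 0 with ∑ᵢ λᵢ yⁱ(yⁱ)ᵀ = (τ/n)·I_n where τ = ∑ᵢλᵢ, and suppose N ≥ 1 and the yⁱ are pairwise distinct with ⟨yⁱ,yʲ⟩ = -1/n for all i ≠ j and ∑ᵢ λᵢ yⁱ = 0. Then N = n+1 and λᵢ = τ/(n+1) for all i. -/

import Mathlib

open scoped RealInnerProductSpace

theorem stmt_16 {n N : ℕ} (hn : 0 < n) (hN : 0 < N)
    (y : Fin N → EuclideanSpace ℝ (Fin n)) (hnorm : ∀ i, ‖y i‖ = 1)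
    (hdist : Function.Injective y)
    (hinner : ∀ i j, i ≠ j → ⟪y i, y j⟫ = -(1 / n : ℝ))
    (lam : Fin N → ℝ) (hlam : ∀ i, 0 < lam i) (τ : ℝ) (hτ : τ = ∑ i, lam i)
    (hdecomp : ∑ i, lam i • Matrix.vecMulVec (y i) (y i) =
      (τ / n) • (1 : Matrix (Fin n) (Fin n) ℝ))
    (hbal : ∑ i, lam i • y i = 0) :
    N = n + 1 ∧ ∀ i, lam i = τ / (n + 1) := by
  have hn0 : (n : ℝ) ≠ 0 := Nat.cast_ne_zero.mpr hn.ne'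
  have hn1 : (n : ℝ) + 1 ≠ 0 := by positivity
  have hlamval : ∀ j, lam j = τ / (n + 1) := by
    intro j
    have h1 : ⟪y j, ∑ i, lam i • y i⟫ = 0 := by rw [hbal]; simp
    rw [inner_sum] at h1
    simp only [real_inner_smul_right] at h1
    rw [← Finset.add_sum_erase _ _ (Finset.mem_univ j)] at h1
    have hjj : ⟪y j, y j⟫ = 1 := by
      rw [real_inner_self_eq_norm_sq, hnorm j]; norm_num
    rw [hjj] at h1
    have h2 : ∑ i ∈ Finset.univ.erase j, lam i * ⟪y j, y i⟫
        = (τ - lam j) * (-(1 / n)) := by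
      rw [Finset.sum_congr rfl (fun i hi => by
        rw [hinner j i (Ne.symm (Finset.ne_of_mem_erase hi))]),
        ← Finset.sum_mul]
      congr 1
      have := Finset.add_sum_erase _ lam (Finset.mem_univ j)
      rw [hτ]; linarith
    rw [h2] at h1
    field_simp at h1 ⊢
    linarith
  refine ⟨?_, hlamval⟩
  have : Nonempty (Fin N) := Fin.pos_iff_nonempty.mp hN
  have hτpos : 0 < τ := by
    rw [hτ]
    exact Finset.sum_pos (fun i _ => hlam i) Finset.univ_nonempty
  have hsum : τ = (N : ℝ) * (τ / (n + 1)) := by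
    conv_lhs => rw [hτ]
    rw [Finset.sum_congr rfl (fun i _ => hlamval i), Finset.sum_const,
      Finset.card_univ, Fintype.card_fin, nsmul_eq_mul]
  have h : (N : ℝ) * τ = ((n : ℝ) + 1) * τ := by
    field_simp at hsum; rw [hsum]
  have : (N : ℝ) = (n : ℝ) + 1 := mul_right_cancel₀ hτpos.ne' h
  exact_mod_cast this
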